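/- Any system of k > n quadratic forms in n variables over F_q can be replaced by a system of at most n quadratic forms, each an F_q-linear combination of the original forms, having the same zero locus in A^n(F_q). -/

import Mathlib

/-- A matrix is in reduced row echelon form: every row is either zero, or has a
leading entry `1` such that all entries to its left in that row are zero, all other
entries in its column are zero, and every later row vanishes at that column and to
its left (so pivots strictly increase and zero rows are at the bottom). -/
def IsRREF {K : Type*} [Field K] {m n : ℕ} (M : Matrix (Fin m) (Fin n) K) : Prop :=
  ∀ i : Fin m, (∀ j, M i j = 0) ∨
    ∃ j : Fin n, M i j = 1 ∧ (∀ j', j' < j → M i j' = 0) ∧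
      (∀ i', i' ≠ i → M i' j = 0) ∧
      (∀ i', i < i' → ∀ j', j' ≤ j → M i' j' = 0)

open Finset MvPolynomial

/-- Cardinality of the kernel of a nonzero linear functional on `K^k`. -/
lemma aux_ker_card {K : Type*} [Field K] [Fintype K] [DecidableEq K] {k : ℕ}
    (v : Fin k → K) (i₀ : Fin k) (h : v i₀ ≠ 0) :
    (Finset.univ.filter (fun c : Fin k → K => ∑ i, c i * v i = 0)).card * Fintype.card K
      = Fintype.card K ^ k := by
  set φ : (Fin k → K) → K := fun c => ∑ i, c i * v i with hφ
  set u : Fin k → K := Pi.single i₀ (v i₀)⁻¹ with hu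
  have hφu : φ u = 1 := by
    simp only [hφ, hu]
    rw [Finset.sum_eq_single i₀]
    · simp [inv_mul_cancel₀ h]
    · intro b _ hb; simp [Pi.single_apply, hb]
    · simp
  have hφadd : ∀ c d : Fin k → K, φ (c + d) = φ c + φ d := by
    intro c d; simp [hφ, add_mul, Finset.sum_add_distrib]
  have hφsmul : ∀ (t : K) (c : Fin k → K), φ (t • c) = t * φ c := by
    intro t c; simp [hφ, Finset.mul_sum, mul_assoc]
  have e : {c : Fin k → K // φ c = 0} × K ≃ (Fin k → K) :=
    { toFun := fun p => p.1.1 + p.2 • u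
      invFun := fun d => (⟨d - φ d • u, by
        have : d - φ d • u = d + (-(φ d)) • u := by
          simp [sub_eq_add_neg, neg_smul]
        rw [this, hφadd, hφsmul, hφu]; ring⟩, φ d)
      left_inv := by
        rintro ⟨⟨c, hc⟩, t⟩
        have h1 : φ (c + t • u) = t := by rw [hφadd, hφsmul, hφu, hc]; ring
        ext <;> simp [h1]
      right_inv := by
        intro d
        have : d - φ d • u + φ d • u = d := by abel
        simp [this] }
  have h1 := Fintype.card_congr e
  rw [Fintype.card_prod, Fintype.card_fun, Fintype.card_fin] at h1
  calc (Finset.univ.filter (fun c : Fin k → K => ∑ i, c i * v i = 0)).card * Fintype.card K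
      = Fintype.card {c : Fin k → K // φ c = 0} * Fintype.card K := by
        rw [Fintype.card_subtype]
    _ = Fintype.card K ^ k := h1

/-- Averaging step: some linear combination kills all but a `1/q` fraction of `S`. -/
lemma aux_step {F : Type*} [Field F] [Fintype F] [DecidableEq F] {n k : ℕ} (hk : 0 < k)
    (v : (Fin n → F) → Fin k → F)
    (S : Finset (Fin n → F)) (hS : ∀ x ∈ S, ∃ i, v x i ≠ 0) :
    ∃ c : Fin k → F,
      (S.filter (fun x => ∑ i, c i * v x i = 0)).card * Fintype.card F ≤ S.card := by
  by_contra hcon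
  push_neg at hcon
  set q := Fintype.card F with hq
  have hq1 : 1 < q := Fintype.one_lt_card
  -- double counting
  have hswap : ∑ c : Fin k → F, (S.filter (fun x => ∑ i, c i * v x i = 0)).card
      = ∑ x ∈ S, (Finset.univ.filter (fun c : Fin k → F => ∑ i, c i * v x i = 0)).card := by
    simp only [Finset.card_filter]
    rw [Finset.sum_comm]
  have hx : ∀ x ∈ S,
      (Finset.univ.filter (fun c : Fin k → F => ∑ i, c i * v x i = 0)).card * q = q ^ k := by
    intro x hx
    obtain ⟨i₀, hi₀⟩ := hS x hx
    simpa using aux_ker_card (v x) i₀ hi₀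
  have hsum : (∑ c : Fin k → F, (S.filter (fun x => ∑ i, c i * v x i = 0)).card) * q
      = S.card * q ^ k := by
    rw [hswap, Finset.sum_mul]
    rw [Finset.sum_congr rfl hx]
    simp [Finset.sum_const, mul_comm]
  -- lower bound from hcon
  have hlow : (S.card + 1) * q ^ k ≤
      (∑ c : Fin k → F, (S.filter (fun x => ∑ i, c i * v x i = 0)).card) * q := by
    calc (S.card + 1) * q ^ k = ∑ _c : Fin k → F, (S.card + 1) := by
          simp [Fintype.card_fun, mul_comm, hq]
      _ ≤ ∑ c : Fin k → F, (S.filter (fun x => ∑ i, c i * v x i = 0)).card * q := by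
          apply Finset.sum_le_sum
          intro c _
          exact hcon c
      _ = _ := by rw [Finset.sum_mul]
  rw [hsum] at hlow
  have hpos : 0 < q ^ k := pow_pos Fintype.card_pos k
  have h2 : S.card + 1 ≤ S.card := le_of_mul_le_mul_right hlow hpos
  exact absurd h2 (Nat.not_succ_le_self _)

theorem stmt_11 {F : Type*} [Field F] [Fintype F] (n : ℕ) (hn : 0 < n)
    (k : ℕ) (hk : n < k) (f : Fin k → MvPolynomial (Fin n) F)
    (hf : ∀ i, (f i).IsHomogeneous 2) :
    ∃ g : Fin n → MvPolynomial (Fin n) F,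
      (∀ i, g i ∈ Submodule.span F (Set.range f)) ∧
      (∀ i, (g i).IsHomogeneous 2) ∧
        {x : Fin n → F | ∀ i, MvPolynomial.eval x (g i) = 0} =
          {x : Fin n → F | ∀ i, MvPolynomial.eval x (f i) = 0} := by
  classical
  set q := Fintype.card F with hq
  have hk0 : 0 < k := lt_trans hn hk
  set v : (Fin n → F) → Fin k → F := fun x i => MvPolynomial.eval x (f i) with hv
  set S₀ : Finset (Fin n → F) :=
    Finset.univ.filter (fun x => ¬ ∀ i, v x i = 0) with hS₀
  -- 0 is a common zero
  have h0 : (0 : Fin n → F) ∉ S₀ := by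
    simp only [hS₀, Finset.mem_filter, not_and, not_not]
    intro _ i
    have : (MvPolynomial.eval (0 : Fin n → F)) (f i) = constantCoeff (f i) := by
      rw [MvPolynomial.eval_zero]
    rw [hv]
    simp only [this]
    exact (hf i).coeff_eq_zero (by simp [map_zero])
  have hS₀lt : S₀.card < q ^ n := by
    have : S₀ ≠ Finset.univ := fun h => h0 (h ▸ Finset.mem_univ _)
    have := Finset.card_lt_card (Finset.ssubset_univ_iff.mpr this)
    simpa [Fintype.card_fun] using this
  -- inductive construction
  have key : ∀ j : ℕ, ∃ c : Fin j → Fin k → F,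
      (S₀.filter (fun x => ∀ i : Fin j, ∑ t, c i t * v x t = 0)).card * q ^ j ≤ S₀.card := by
    intro j
    induction j with
    | zero =>
      refine ⟨fun i => absurd i.2 (by omega), ?_⟩
      simp [Finset.filter_true_of_mem (fun x _ => fun i : Fin 0 => absurd i.2 (by omega))]
    | succ j ih =>
      obtain ⟨c, hc⟩ := ih
      set Sj := S₀.filter (fun x => ∀ i : Fin j, ∑ t, c i t * v x t = 0) with hSj
      have hSjgood : ∀ x ∈ Sj, ∃ i, v x i ≠ 0 := by
        intro x hx
        have := (Finset.mem_filter.mp hx).1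
        rw [hS₀, Finset.mem_filter] at this
        push_neg at this
        exact this.2
      obtain ⟨c', hc'⟩ := aux_step hk0 v Sj hSjgood
      set cc : Fin (j+1) → Fin k → F := Fin.cons c' c with hcc
      refine ⟨cc, ?_⟩
      have hcc0 : cc 0 = c' := by simp [hcc]
      have hccs : ∀ i : Fin j, cc i.succ = c i := by intro i; simp [hcc]
      have heq : S₀.filter (fun x => ∀ i : Fin (j+1), ∑ t, cc i t * v x t = 0)
          = Sj.filter (fun x => ∑ t, c' t * v x t = 0) := by
        conv_rhs => rw [hSj, Finset.filter_filter]
        apply Finset.filter_congr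
        intro x _
        constructor
        · intro h
          refine ⟨fun i => ?_, ?_⟩
          · have h' := h i.succ
            rw [hccs i] at h'
            exact h'
          · have h' := h 0
            rw [hcc0] at h'
            exact h'
        · rintro ⟨h1, h2⟩ i
          refine Fin.cases ?_ ?_ i
          · rw [hcc0]; exact h2
          · intro i'; rw [hccs i']; exact h1 i'
      rw [heq, pow_succ]
      calc (Sj.filter (fun x => ∑ t, c' t * v x t = 0)).card * (q ^ j * q)
          = ((Sj.filter (fun x => ∑ t, c' t * v x t = 0)).card * q) * q ^ j := by ring
        _ ≤ Sj.card * q ^ j := Nat.mul_le_mul_right _ hc'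
        _ ≤ S₀.card := hc
  obtain ⟨c, hc⟩ := key n
  refine ⟨fun i => ∑ t, c i t • f t, ?_, ?_, ?_⟩
  · intro i
    exact Submodule.sum_mem _ fun t _ =>
      Submodule.smul_mem _ _ (Submodule.subset_span ⟨t, rfl⟩)
  · intro i
    have : (∑ t, c i t • f t) ∈ homogeneousSubmodule (Fin n) F 2 :=
      Submodule.sum_mem _ fun t _ =>
        Submodule.smul_mem _ _ ((mem_homogeneousSubmodule _ _).mpr (hf t))
    exact (mem_homogeneousSubmodule _ _).mp this
  · have heval : ∀ (x : Fin n → F) i,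
        MvPolynomial.eval x (∑ t, c i t • f t) = ∑ t, c i t * v x t := by
      intro x i
      rw [map_sum]
      apply Finset.sum_congr rfl
      intro t _
      simp only [smul_eq_C_mul, map_mul, eval_C, hv]
    -- the filtered set is empty
    have hempty : S₀.filter (fun x => ∀ i : Fin n, ∑ t, c i t * v x t = 0) = ∅ := by
      by_contra hne
      obtain ⟨x, hx⟩ := Finset.nonempty_iff_ne_empty.mpr hne
      have h1 : 1 ≤ (S₀.filter (fun x => ∀ i : Fin n, ∑ t, c i t * v x t = 0)).card :=
        Finset.card_pos.mpr ⟨x, hx⟩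
      have := Nat.mul_le_mul_right (q ^ n) h1
      omega
    ext x
    simp only [Set.mem_setOf_eq]
    constructor
    · intro hg i
      by_contra hfi
      have hxS : x ∈ S₀ := by
        rw [hS₀, Finset.mem_filter]
        exact ⟨Finset.mem_univ _, by push_neg; exact ⟨i, hfi⟩⟩
      have : x ∈ S₀.filter (fun x => ∀ i : Fin n, ∑ t, c i t * v x t = 0) :=
        Finset.mem_filter.mpr ⟨hxS, fun i => by rw [← heval]; exact hg i⟩
      rw [hempty] at this
      exact absurd this (Finset.notMem_empty _)
    · intro hfz i
      rw [heval]
      apply Finset.sum_eq_zero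
      intro t _
      rw [hv]
      simp [hfz t]
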